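/- For any upper semicontinuous bounded utility v: Δ(Ω) → ℝ and any prior μ ∈ Δ(Ω), there exists a set O ⊆ Δ(Ω) with μ ∈ conv(O) such that for every p ∈ conv(O) and every experiment e = (λ_j, p_j)_{j∈[m]} ∈ F_0 with σ(e) = p, one has Σ_{j∈[m]} λ_j v(p_j) = v̂(p) if and only if τ(e) ⊆ O. -/

import Mathlib

open Filter Topology
open scoped Classical

noncomputable section

/-- Δ(Ω): beliefs, i.e. probability distributions on the finite state space Ω,
as a subspace of Ω → ℝ (its topology agrees with the total-variation one). -/
abbrev Belief (Ω : Type*) [Fintype Ω] :=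
  {p : Ω → ℝ // (∀ ω, 0 ≤ p ω) ∧ ∑ ω, p ω = 1}

variable {Ω : Type*} [Fintype Ω]

/-- An element of F₀: a finite-support experiment, i.e. a finitely supported probability
distribution over beliefs (keys are the distinct posteriors p_j, values the positive
weights λ_j). -/
structure SPExp (Ω : Type*) [Fintype Ω] where
  w : Belief Ω →₀ ℝ
  nonneg : ∀ p, 0 ≤ w p
  sum_one : ∑ p ∈ w.support, w p = 1

namespace SPExp

/-- τ(e): the support of an experiment. -/
def tau (e : SPExp Ω) : Finset (Belief Ω) := e.w.support

/-- Expectation of a real-valued function under an experiment. -/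
def expect (e : SPExp Ω) (f : Belief Ω → ℝ) : ℝ := ∑ p ∈ e.w.support, e.w p * f p

/-- σ(e): the barycenter (expectation) of an experiment. -/
def sigma (e : SPExp Ω) : Belief Ω :=
  ⟨fun ω => ∑ p ∈ e.w.support, e.w p * p.val ω,
   fun ω => Finset.sum_nonneg fun p _ => mul_nonneg (e.nonneg p) (p.2.1 ω),
   by
     calc ∑ ω, ∑ p ∈ e.w.support, e.w p * p.val ω
         = ∑ p ∈ e.w.support, ∑ ω, e.w p * p.val ω := Finset.sum_comm
       _ = ∑ p ∈ e.w.support, e.w p * ∑ ω, p.val ω := by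
           refine Finset.sum_congr rfl fun p _ => ?_
           rw [Finset.mul_sum]
       _ = ∑ p ∈ e.w.support, e.w p := by
           refine Finset.sum_congr rfl fun p _ => ?_
           rw [p.2.2, mul_one]
       _ = 1 := e.sum_one⟩

/-- The trivial experiment (1, p). -/
def triv (p : Belief Ω) : SPExp Ω where
  w := Finsupp.single p 1
  nonneg := fun q => by
    rw [Finsupp.single_apply]
    split <;> norm_num
  sum_one := by
    rw [Finsupp.support_single_ne_zero _ one_ne_zero]
    simp

end SPExp

/-- T: the set of trivial experiments. -/
def Trivials (Ω : Type*) [Fintype Ω] : Set (SPExp Ω) := Set.range SPExp.triv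

/-- Weak convergence of experiments, viewed as Borel probability measures on Δ(Ω). -/
def WeakTendsto (es : ℕ → SPExp Ω) (e : SPExp Ω) : Prop :=
  ∀ f : Belief Ω → ℝ, Continuous f →
    Tendsto (fun i => (es i).expect f) atTop (𝓝 (e.expect f))

/-- Convergence of beliefs in total variation. -/
def TVTendsto (ps : ℕ → Belief Ω) (p : Belief Ω) : Prop :=
  Tendsto (fun i => ∑ ω, |(ps i).val ω - p.val ω|) atTop (𝓝 0)

/-- Histories, most recent step first: entries are (experiment taken, realized posterior);
the starting belief is kept separately. -/
abbrev Hist (Ω : Type*) [Fintype Ω] := List (SPExp Ω × Belief Ω)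

/-- last(ξ): the current belief after history ξ started at μ. -/
def lastBelief (μ : Belief Ω) : Hist Ω → Belief Ω
  | [] => μ
  | (_, p) :: _ => p

/-- Pr[ξ]: the probability of a history. -/
def histProb : Hist Ω → ℝ
  | [] => 1
  | (e, p) :: ξ => e.w p * histProb ξ

/-- A sequential persuasion starting from μ with feasible experiments F, given by its
history-dependent choice of the next (feasible, Bayes-plausible) experiment.  An n-step
sequential persuasion is such a strategy used for n steps; an infinite sequential
persuasion is the strategy itself. -/
structure SeqP {Ω : Type*} [Fintype Ω] (F : Set (SPExp Ω)) (μ : Belief Ω) where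
  next : Hist Ω → SPExp Ω
  feasible : ∀ ξ, next ξ ∈ F
  bayes : ∀ ξ, (next ξ).sigma = lastBelief μ ξ

variable {F : Set (SPExp Ω)} {μ : Belief Ω}

/-- Expectation of g over the n-step histories of S extending ξ. -/
def histExp (S : SeqP F μ) (g : Hist Ω → ℝ) : ℕ → Hist Ω → ℝ
  | 0, ξ => g ξ
  | n + 1, ξ => (S.next ξ).expect fun p => histExp S g n ((S.next ξ, p) :: ξ)

/-- Ξ_n: the set of n-step histories of S. -/
def Hists (S : SeqP F μ) : ℕ → Set (Hist Ω)
  | 0 => {[]}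
  | n + 1 => {ξ' | ∃ ξ ∈ Hists S n, ∃ p ∈ (S.next ξ).tau, ξ' = (S.next ξ, p) :: ξ}

/-- ξ padded by l trivial steps. -/
def padHist (μ : Belief Ω) (ξ : Hist Ω) (l : ℕ) : Hist Ω :=
  List.replicate l (SPExp.triv (lastBelief μ ξ), lastBelief μ ξ) ++ ξ

/-- S terminates after ξ: all subsequent choices (along trivial continuations of ξ)
are the trivial experiment. -/
def TerminatesAfter (S : SeqP F μ) (ξ : Hist Ω) : Prop :=
  ∀ l : ℕ, S.next (padHist μ ξ l) = SPExp.triv (lastBelief μ ξ)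

/-- 𝒱(S⁽ⁿ⁾) = E[v(b_n)], the expected utility of the n-step persuasion given by the
first n steps of S. -/
def stepUtility (v : Belief Ω → ℝ) (S : SeqP F μ) (n : ℕ) : ℝ :=
  histExp S (fun ξ => v (lastBelief μ ξ)) n []

/-- Pr[S terminates after n steps]. -/
def termProb (S : SeqP F μ) (n : ℕ) : ℝ :=
  histExp S (fun ξ => if TerminatesAfter S ξ then 1 else 0) n []

/-- 𝒱(S) for an infinite sequential persuasion S. -/
def infUtility (v : Belief Ω → ℝ) (S : SeqP F μ) : ℝ :=
  ⨆ n : ℕ, histExp S (fun ξ => if TerminatesAfter S ξ then v (lastBelief μ ξ) else 0) n []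

/-- Pr[b_n ∈ O] for the belief b_n induced by S after n steps. -/
def massIn (S : SeqP F μ) (O : Set (Belief Ω)) (n : ℕ) : ℝ :=
  histExp S (fun ξ => if lastBelief μ ξ ∈ O then 1 else 0) n []

/-- v_n(p): the optimal value over n-step sequential persuasions starting from p. -/
def vN (F : Set (SPExp Ω)) (v : Belief Ω → ℝ) (n : ℕ) (p : Belief Ω) : ℝ :=
  ⨆ S : SeqP F p, stepUtility v S n

/-- v_∞(p): the optimal value over infinite sequential persuasions starting from p. -/
def vInf (F : Set (SPExp Ω)) (v : Belief Ω → ℝ) (p : Belief Ω) : ℝ :=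
  ⨆ S : SeqP F p, infUtility v S

/-- Assumption 1: a uniform support bound h, and weak closedness of F. -/
def Assumption1 (F : Set (SPExp Ω)) (h : ℕ) : Prop :=
  (∀ e ∈ F, e.tau.card ≤ h) ∧
  ∀ es : ℕ → SPExp Ω, (∀ i, es i ∈ F) → ∀ e : SPExp Ω, WeakTendsto es e → e ∈ F

/-- Shannon entropy of a belief. -/
def entropy (p : Belief Ω) : ℝ := -∑ ω, p.val ω * Real.log (p.val ω)

/-- Assumption 2: every nontrivial feasible experiment lowers expected entropy by δ. -/
def Assumption2 (F : Set (SPExp Ω)) (δ : ℝ) : Prop :=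
  ∀ e ∈ F \ Trivials Ω, e.expect entropy ≤ entropy e.sigma - δ

/-- S is (effectively) an n-step sequential persuasion: after n steps it only takes
trivial experiments. -/
def IsNStep (S : SeqP F μ) (n : ℕ) : Prop :=
  ∀ ξ : Hist Ω, n ≤ ξ.length → S.next ξ = SPExp.triv (lastBelief μ ξ)

/-- Assumption 3 at prior μ: a sequence of finite-step sequential persuasions whose
values tend to v_∞(μ) and which terminate at a uniform rate. -/
def Assumption3 (F : Set (SPExp Ω)) (v : Belief Ω → ℝ) (μ : Belief Ω) : Prop :=
  ∃ (nk : ℕ → ℕ) (Sk : ℕ → SeqP F μ),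
    (∀ k, IsNStep (Sk k) (nk k)) ∧
    Tendsto (fun k => stepUtility v (Sk k) (nk k)) atTop (𝓝 (vInf F v μ)) ∧
    ∀ ε : ℝ, 0 < ε → ∃ N : ℕ, ∀ k, N ≤ nk k → 1 - ε ≤ termProb (Sk k) N

/-- v̂: the concave closure of v (the value of unconstrained Bayesian persuasion). -/
def concaveClosure (v : Belief Ω → ℝ) (p : Belief Ω) : ℝ :=
  sSup {x : ℝ | ∃ e : SPExp Ω, e.sigma = p ∧ x = e.expect v}

/-- O is implementable for (μ, F). -/
def Implementable (F : Set (SPExp Ω)) (μ : Belief Ω) (O : Set (Belief Ω)) : Prop :=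
  ∀ ε : ℝ, 0 < ε → ∃ (n : ℕ) (S : SeqP F μ), 1 - ε < massIn S O n

/-- S is a Markov sequential persuasion compatible with (μ, D, Z, ρ). -/
def MarkovCompatible (S : SeqP F μ) (D Z : Set (Belief Ω)) (ρ : Belief Ω → SPExp Ω) : Prop :=
  ∀ ξ : Hist Ω,
    (lastBelief μ ξ ∈ D → S.next ξ = ρ (lastBelief μ ξ)) ∧
    (lastBelief μ ξ ∈ Z → S.next ξ = SPExp.triv (lastBelief μ ξ))

/-- The j-th child of vertex m at depth n of the infinite h-ary tree. -/
def treeChild {h n : ℕ} (m : Fin (h ^ n)) (j : Fin h) : Fin (h ^ (n + 1)) :=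
  ⟨m.val * h + j.val, by
    have h1 : m.val + 1 ≤ h ^ n := m.isLt
    have h2 : j.val < h := j.isLt
    calc m.val * h + j.val < m.val * h + h := by omega
      _ = (m.val + 1) * h := by ring
      _ ≤ h ^ n * h := Nat.mul_le_mul h1 le_rfl
      _ = h ^ (n + 1) := (pow_succ h n).symm⟩

/-- An h-branching sequential persuasion starting from μ. -/
structure HBranch (Ω : Type*) [Fintype Ω] (F : Set (SPExp Ω)) (h : ℕ) (μ : Belief Ω) where
  π : ∀ n : ℕ, Fin (h ^ n) → ℝ
  β : ∀ n : ℕ, Fin (h ^ n) → Belief Ω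
  η : ∀ n : ℕ, Fin (h ^ n) → SPExp Ω
  π_nonneg : ∀ n m, 0 ≤ π n m
  π_sum : ∀ n : ℕ, ∑ m, π n m = 1
  η_mem : ∀ n m, η n m ∈ F
  β_root : ∀ m, β 0 m = μ
  compat_sigma : ∀ n m, (η n m).sigma = β n m
  compat_tau : ∀ (n : ℕ) (m : Fin (h ^ n)), ∀ p ∈ (η n m).tau,
    ∃ j : Fin h, β (n + 1) (treeChild m j) = p
  consistent : ∀ (n : ℕ) (m : Fin (h ^ n)) (p : Belief Ω),
    (∑ j : Fin h, if β (n + 1) (treeChild m j) = p then π (n + 1) (treeChild m j) else 0)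
      = π n m * (η n m).w p

/-- c' (at depth n + l) is a descendant of c (at depth n) in the h-ary tree. -/
def Descendant {h : ℕ} : {n : ℕ} → (l : ℕ) → Fin (h ^ n) → Fin (h ^ (n + l)) → Prop
  | _, 0, c, c' => c = c'
  | _, l + 1, c, c' => ∃ c'' j, Descendant l c c'' ∧ c' = treeChild c'' j

namespace HBranch

variable {h : ℕ}

/-- B terminates after vertex m at depth n. -/
def TermAfter (B : HBranch Ω F h μ) (n : ℕ) (m : Fin (h ^ n)) : Prop :=
  B.η n m ∈ Trivials Ω ∧
  ∀ (l : ℕ) (c' : Fin (h ^ (n + l))), Descendant l m c' → 0 < B.π (n + l) c' →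
    B.η (n + l) c' ∈ Trivials Ω

/-- Pr[B terminates after n steps]. -/
def termProb (B : HBranch Ω F h μ) (n : ℕ) : ℝ :=
  ∑ m : Fin (h ^ n), if B.TermAfter n m then B.π n m else 0

end HBranch

/-- B represents the infinite sequential persuasion S (via maps r_n : C_n → Ξ_n). -/
def Represents (S : SeqP F μ) {h : ℕ} (B : HBranch Ω F h μ) : Prop :=
  ∃ r : ∀ n : ℕ, Fin (h ^ n) → Hist Ω,
    ∀ n : ℕ,
      (∀ c, r n c ∈ Hists S n) ∧
      (∀ ξ ∈ Hists S n, histProb ξ = ∑ c, if r n c = ξ then B.π n c else 0) ∧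
      (∀ c, lastBelief μ (r n c) = B.β n c ∧ S.next (r n c) = B.η n c) ∧
      (∀ l : ℕ, ∀ ξ ∈ Hists S n, ∀ ξ' ∈ Hists S (n + l),
        (ξ <:+ ξ' ↔
          ∀ c' : Fin (h ^ (n + l)), r (n + l) c' = ξ' →
            ∃ c : Fin (h ^ n), r n c = ξ ∧ Descendant l c c'))

/-- The number of nontrivial experiments taken along a history. -/
def nontrivCount (ξ : Hist Ω) : ℕ :=
  ξ.countP fun s => decide (s.1 ∉ Trivials Ω)

end

/-! ### Auxiliary material for `lem_support_identify` -/

noncomputable section AuxSupportIdentify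

open Finset

variable {Ω : Type*} [Fintype Ω]

lemma mySum_subset (w : Belief Ω →₀ ℝ) {s : Finset (Belief Ω)} (hs : w.support ⊆ s)
    (g : Belief Ω → ℝ) : ∑ p ∈ w.support, w p * g p = ∑ p ∈ s, w p * g p :=
  Finset.sum_subset hs fun p _ hp => by
    rw [Finsupp.notMem_support_iff.mp hp, zero_mul]

lemma mySigma_val (e : SPExp Ω) (ω : Ω) :
    (e.sigma).val ω = ∑ p ∈ e.w.support, e.w p * p.val ω := rfl

lemma myExpect_eq (e : SPExp Ω) (f : Belief Ω → ℝ) :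
    e.expect f = ∑ p ∈ e.w.support, e.w p * f p := rfl

lemma mySigma_val_expect (e : SPExp Ω) (ω : Ω) :
    (e.sigma).val ω = e.expect (fun p => p.val ω) := rfl

lemma myTriv_sigma (p : Belief Ω) : (SPExp.triv p).sigma = p := by
  apply Subtype.ext; funext ω
  show ∑ q ∈ (SPExp.triv p).w.support, (SPExp.triv p).w q * q.val ω = p.val ω
  have hw : (SPExp.triv p).w = Finsupp.single p 1 := rfl
  rw [hw, Finsupp.support_single_ne_zero p one_ne_zero]
  simp

lemma myTriv_expect (p : Belief Ω) (f : Belief Ω → ℝ) : (SPExp.triv p).expect f = f p := by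
  show ∑ q ∈ (SPExp.triv p).w.support, (SPExp.triv p).w q * f q = f p
  have hw : (SPExp.triv p).w = Finsupp.single p 1 := rfl
  rw [hw, Finsupp.support_single_ne_zero p one_ne_zero]
  simp

lemma myExpect_mono (e : SPExp Ω) {f g : Belief Ω → ℝ}
    (h : ∀ p ∈ e.w.support, f p ≤ g p) : e.expect f ≤ e.expect g :=
  Finset.sum_le_sum fun p hp => mul_le_mul_of_nonneg_left (h p hp) (e.nonneg p)

lemma myExpect_congr (e : SPExp Ω) {f g : Belief Ω → ℝ}
    (h : ∀ p ∈ e.w.support, f p = g p) : e.expect f = e.expect g :=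
  Finset.sum_congr rfl fun p hp => by rw [h p hp]

lemma myExpect_le_const (e : SPExp Ω) {f : Belief Ω → ℝ} {c : ℝ}
    (h : ∀ p ∈ e.w.support, f p ≤ c) : e.expect f ≤ c := by
  calc e.expect f ≤ ∑ p ∈ e.w.support, e.w p * c :=
        Finset.sum_le_sum fun p hp => mul_le_mul_of_nonneg_left (h p hp) (e.nonneg p)
    _ = c := by rw [← Finset.sum_mul, e.sum_one, one_mul]

/-- The set of achievable values of experiments with barycenter `p`. -/
def vSet (v : Belief Ω → ℝ) (p : Belief Ω) : Set ℝ :=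
  {x | ∃ e : SPExp Ω, e.sigma = p ∧ x = e.expect v}

lemma cc_eq_sSup (v : Belief Ω → ℝ) (p : Belief Ω) :
    concaveClosure v p = sSup (vSet v p) := rfl

lemma vSet_nonempty (v : Belief Ω → ℝ) (p : Belief Ω) : (vSet v p).Nonempty :=
  ⟨v p, SPExp.triv p, myTriv_sigma p, (myTriv_expect p v).symm⟩

lemma vSet_bddAbove (v : Belief Ω → ℝ) {C : ℝ} (hbd : ∀ p, |v p| ≤ C) (p : Belief Ω) :
    BddAbove (vSet v p) := by
  refine ⟨C, ?_⟩
  rintro x ⟨e, -, rfl⟩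
  exact myExpect_le_const e fun q _ => (abs_le.mp (hbd q)).2

lemma le_cc (v : Belief Ω → ℝ) {C : ℝ} (hbd : ∀ p, |v p| ≤ C) (p : Belief Ω) :
    v p ≤ concaveClosure v p :=
  le_csSup (vSet_bddAbove v hbd p) ⟨SPExp.triv p, myTriv_sigma p, (myTriv_expect p v).symm⟩

lemma cc_le (v : Belief Ω → ℝ) {C : ℝ} (hbd : ∀ p, |v p| ≤ C) (p : Belief Ω) :
    concaveClosure v p ≤ C :=
  csSup_le (vSet_nonempty v p) (by
    rintro x ⟨e, -, rfl⟩
    exact myExpect_le_const e fun q _ => (abs_le.mp (hbd q)).2)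

/-- Build an experiment from an indexed convex combination of beliefs. -/
lemma exists_mkExp {ι : Type*} (t : Finset ι) (w : ι → ℝ) (q : ι → Belief Ω)
    (h0 : ∀ i ∈ t, 0 ≤ w i) (h1 : ∑ i ∈ t, w i = 1) :
    ∃ e : SPExp Ω, ∀ f : Belief Ω → ℝ, e.expect f = ∑ i ∈ t, w i * f (q i) := by
  classical
  set W : Belief Ω →₀ ℝ := ∑ i ∈ t, Finsupp.single (q i) (w i) with hW
  have happ : ∀ p, W p = ∑ i ∈ t, if q i = p then w i else 0 := by
    intro p
    rw [hW]
    simpa only [Finsupp.applyAddHom_apply, Finsupp.single_apply] using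
      map_sum (Finsupp.applyAddHom p) (fun i => Finsupp.single (q i) (w i)) t
  have hsupp : W.support ⊆ t.image q := by
    intro p hp
    by_contra hmem
    apply Finsupp.mem_support_iff.mp hp
    rw [happ]
    refine Finset.sum_eq_zero fun i hi => ?_
    refine if_neg fun hqi => hmem ?_
    exact Finset.mem_image.mpr ⟨i, hi, hqi⟩
  have key : ∀ g : Belief Ω → ℝ, ∑ p ∈ W.support, W p * g p = ∑ i ∈ t, w i * g (q i) := by
    intro g
    have h2 : ∑ p ∈ W.support, W p * g p = ∑ p ∈ t.image q, W p * g p :=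
      Finset.sum_subset hsupp fun p _ hp => by
        rw [Finsupp.notMem_support_iff.mp hp, zero_mul]
    rw [h2]
    have h3 : ∀ p ∈ t.image q, W p * g p = ∑ i ∈ t, (if q i = p then w i * g p else 0) := by
      intro p _
      rw [happ, Finset.sum_mul]
      exact Finset.sum_congr rfl fun i _ => by split <;> simp
    rw [Finset.sum_congr rfl h3, Finset.sum_comm]
    refine Finset.sum_congr rfl fun i hi => ?_
    have h4 : ∀ p ∈ t.image q, (if q i = p then w i * g p else 0)
        = (if p = q i then w i * g (q i) else 0) := by
      intro p _
      by_cases h : q i = p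
      · rw [if_pos h, if_pos h.symm, h]
      · rw [if_neg h, if_neg (Ne.symm h)]
    rw [Finset.sum_congr rfl h4, Finset.sum_ite_eq' (t.image q) (q i) (fun _ => w i * g (q i)),
      if_pos (Finset.mem_image.mpr ⟨i, hi, rfl⟩)]
  refine ⟨⟨W, ?_, ?_⟩, ?_⟩
  · intro p
    rw [happ]
    exact Finset.sum_nonneg fun i hi => by
      split
      · exact h0 i hi
      · exact le_refl 0
  · have := key fun _ => 1
    simpa [h1] using this
  · intro f
    exact key f

/-! ### Faces -/

/-- The face of the simplex determined by the support of `μ`. -/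
def faceSet (μ : Belief Ω) : Set (Belief Ω) := {q | ∀ ω, μ.val ω = 0 → q.val ω = 0}

lemma face_self (μ : Belief Ω) : μ ∈ faceSet μ := fun _ h => h

lemma tau_subset_face {μ : Belief Ω} (e : SPExp Ω) (h : e.sigma ∈ faceSet μ) :
    ∀ p ∈ e.w.support, p ∈ faceSet μ := by
  intro p hp ω hω
  have h0 : ∑ q ∈ e.w.support, e.w q * q.val ω = 0 := h ω hω
  have h1 := (Finset.sum_eq_zero_iff_of_nonneg
    (fun q _ => mul_nonneg (e.nonneg q) (q.2.1 ω))).mp h0 p hp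
  rcases mul_eq_zero.mp h1 with h2 | h2
  · exact absurd h2 (Finsupp.mem_support_iff.mp hp)
  · exact h2

/-! ### Concavity of the concave closure -/

lemma vSet_combo {v : Belief Ω → ℝ} {p₁ p₂ p₃ : Belief Ω} {t : ℝ} (ht0 : 0 ≤ t) (ht1 : t ≤ 1)
    (hp : ∀ ω, p₃.val ω = t * p₁.val ω + (1 - t) * p₂.val ω) :
    ∀ x₁ ∈ vSet v p₁, ∀ x₂ ∈ vSet v p₂, t * x₁ + (1 - t) * x₂ ∈ vSet v p₃ := by
  rintro x₁ ⟨e₁, hσ₁, rfl⟩ x₂ ⟨e₂, hσ₂, rfl⟩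
  set W : Belief Ω →₀ ℝ := t • e₁.w + (1 - t) • e₂.w with hW
  have happ : ∀ p, W p = t * e₁.w p + (1 - t) * e₂.w p := by
    intro p; simp [hW, Finsupp.add_apply, Finsupp.smul_apply, smul_eq_mul]
  have hsupp : W.support ⊆ e₁.w.support ∪ e₂.w.support := by
    intro p hp'
    by_contra hmem
    rw [Finset.mem_union, not_or] at hmem
    apply Finsupp.mem_support_iff.mp hp'
    rw [happ, Finsupp.notMem_support_iff.mp hmem.1, Finsupp.notMem_support_iff.mp hmem.2]
    ring
  have key : ∀ g : Belief Ω → ℝ, ∑ p ∈ W.support, W p * g p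
      = t * e₁.expect g + (1 - t) * e₂.expect g := by
    intro g
    have h2 : ∑ p ∈ W.support, W p * g p = ∑ p ∈ e₁.w.support ∪ e₂.w.support, W p * g p :=
      Finset.sum_subset hsupp fun p _ hp' => by
        rw [Finsupp.notMem_support_iff.mp hp', zero_mul]
    have h3 : ∀ (e : SPExp Ω), e.w.support ⊆ e₁.w.support ∪ e₂.w.support →
        e.expect g = ∑ p ∈ e₁.w.support ∪ e₂.w.support, e.w p * g p := fun e hss =>
      mySum_subset e.w hss g
    rw [h2, h3 e₁ Finset.subset_union_left, h3 e₂ Finset.subset_union_right,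
      Finset.mul_sum, Finset.mul_sum, ← Finset.sum_add_distrib]
    refine Finset.sum_congr rfl fun p _ => ?_
    rw [happ]; ring
  have hnn : ∀ p, 0 ≤ W p := fun p => by
    rw [happ]
    have := e₁.nonneg p; have := e₂.nonneg p
    nlinarith
  have hs1 : ∑ p ∈ W.support, W p = 1 := by
    have h9 := key fun _ => 1
    have g1 : e₁.expect (fun _ => 1) = 1 := by
      rw [myExpect_eq]; simpa using e₁.sum_one
    have g2 : e₂.expect (fun _ => 1) = 1 := by
      rw [myExpect_eq]; simpa using e₂.sum_one
    rw [g1, g2] at h9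
    simp only [mul_one] at h9
    rw [h9]; ring
  refine ⟨⟨W, hnn, hs1⟩, ?_, ?_⟩
  · apply Subtype.ext; funext ω
    have := key fun p => p.val ω
    show ∑ p ∈ W.support, W p * p.val ω = p₃.val ω
    rw [this, hp ω]
    have g1 : e₁.expect (fun p => p.val ω) = p₁.val ω := by
      rw [← mySigma_val_expect, hσ₁]
    have g2 : e₂.expect (fun p => p.val ω) = p₂.val ω := by
      rw [← mySigma_val_expect, hσ₂]
    rw [g1, g2]
  · exact (key v).symm

lemma cc_concave (v : Belief Ω → ℝ) {C : ℝ} (hbd : ∀ p, |v p| ≤ C)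
    {p₁ p₂ p₃ : Belief Ω} {t : ℝ} (ht0 : 0 ≤ t) (ht1 : t ≤ 1)
    (hp : ∀ ω, p₃.val ω = t * p₁.val ω + (1 - t) * p₂.val ω) :
    t * concaveClosure v p₁ + (1 - t) * concaveClosure v p₂ ≤ concaveClosure v p₃ := by
  have hbdd := vSet_bddAbove v hbd p₃
  have step : ∀ x₁ ∈ vSet v p₁, ∀ x₂ ∈ vSet v p₂, t * x₁ + (1 - t) * x₂ ≤ concaveClosure v p₃ :=
    fun x₁ hx₁ x₂ hx₂ => le_csSup hbdd (vSet_combo ht0 ht1 hp x₁ hx₁ x₂ hx₂)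
  rcases eq_or_lt_of_le ht0 with h0 | h0
  · rw [← h0]
    simp only [zero_mul, sub_zero, one_mul, zero_add]
    refine csSup_le (vSet_nonempty v p₂) fun x₂ hx₂ => ?_
    obtain ⟨x₁, hx₁⟩ := vSet_nonempty v p₁
    have := step x₁ hx₁ x₂ hx₂
    rw [← h0] at this
    linarith
  rcases eq_or_lt_of_le ht1 with h1 | h1
  · rw [h1]
    simp only [sub_self, zero_mul, add_zero, one_mul]
    refine csSup_le (vSet_nonempty v p₁) fun x₁ hx₁ => ?_
    obtain ⟨x₂, hx₂⟩ := vSet_nonempty v p₂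
    have := step x₁ hx₁ x₂ hx₂
    rw [h1] at this
    linarith
  have h1t : 0 < 1 - t := by linarith
  have hcc2 : ∀ x₁ ∈ vSet v p₁,
      (1 - t) * concaveClosure v p₂ ≤ concaveClosure v p₃ - t * x₁ := by
    intro x₁ hx₁
    have h5 : concaveClosure v p₂ ≤ (concaveClosure v p₃ - t * x₁) / (1 - t) :=
      csSup_le (vSet_nonempty v p₂) fun x₂ hx₂ =>
        (le_div_iff₀ h1t).mpr (by linarith [step x₁ hx₁ x₂ hx₂])
    have h6 := (le_div_iff₀ h1t).mp h5
    linarith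
  have h7 : concaveClosure v p₁ ≤ (concaveClosure v p₃ - (1 - t) * concaveClosure v p₂) / t :=
    csSup_le (vSet_nonempty v p₁) fun x₁ hx₁ =>
      (le_div_iff₀ h0).mpr (by linarith [hcc2 x₁ hx₁])
  have h8 := (le_div_iff₀ h0).mp h7
  linarith

/-! ### Compactness material -/

lemma fin_pad_sum {M : Type*} [AddCommMonoid M] {m N : ℕ} (hmN : m ≤ N) (F : Fin m → M) :
    (∑ j : Fin N, if h : (j : ℕ) < m then F ⟨j, h⟩ else 0) = ∑ i : Fin m, F i := by
  have A := Fin.sum_univ_eq_sum_range (fun j => if h : j < m then F ⟨j, h⟩ else 0) N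
  have B := Fin.sum_univ_eq_sum_range (fun j => if h : j < m then F ⟨j, h⟩ else 0) m
  have hBN : (∑ j ∈ Finset.range m, if h : j < m then F ⟨j, h⟩ else 0)
      = ∑ j ∈ Finset.range N, if h : j < m then F ⟨j, h⟩ else 0 :=
    Finset.sum_subset (Finset.range_subset_range.mpr hmN) fun x _ hx =>
      dif_neg (by simpa using hx)
  have hD : (∑ j : Fin m, if h : (j : ℕ) < m then F ⟨j, h⟩ else 0) = ∑ i : Fin m, F i :=
    Finset.sum_congr rfl fun j _ => by rw [dif_pos j.isLt]
  rw [A, ← hBN, ← B, hD]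

lemma my_isCompact_convexHull {E : Type*} [NormedAddCommGroup E] [NormedSpace ℝ E]
    [FiniteDimensional ℝ E] {s : Set E} (hs : IsCompact s) (hne : s.Nonempty) :
    IsCompact (convexHull ℝ s) := by
  classical
  set N := Module.finrank ℝ E + 1 with hN
  set f : (Fin N → ℝ) × (Fin N → E) → E := fun wz => ∑ j : Fin N, wz.1 j • wz.2 j with hf
  have hfc : Continuous f := by
    apply continuous_finset_sum
    intro j _
    exact ((continuous_apply j).comp continuous_fst).smul
      ((continuous_apply j).comp continuous_snd)
  have hK : IsCompact ((stdSimplex ℝ (Fin N)) ×ˢ (Set.pi Set.univ fun _ : Fin N => s)) :=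
    (isCompact_stdSimplex (𝕜 := ℝ) (ι := Fin N)).prod (isCompact_univ_pi fun _ => hs)
  have himg : convexHull ℝ s = f '' ((stdSimplex ℝ (Fin N)) ×ˢ
      (Set.pi Set.univ fun _ : Fin N => s)) := by
    apply Set.Subset.antisymm
    · intro x hx
      obtain ⟨ι, hfin, z, w, hzs, hai, hw0, hw1, hsum⟩ :=
        eq_pos_convex_span_of_mem_convexHull hx
      have hcard : Fintype.card ι ≤ N := by
        refine le_trans hai.card_le_finrank_succ ?_
        exact add_le_add_left (Submodule.finrank_le _) 1
      set m := Fintype.card ι with hm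
      set eqv := (Fintype.equivFin ι).symm with heqv
      set wn : Fin N → ℝ := fun j => if h : (j : ℕ) < m then w (eqv ⟨j, h⟩) else 0 with hwn
      set zn : Fin N → E := fun j => if h : (j : ℕ) < m then z (eqv ⟨j, h⟩) else hne.some
        with hzn
      refine ⟨(wn, zn), ⟨⟨?_, ?_⟩, ?_⟩, ?_⟩
      · intro j
        simp only [hwn]
        split
        · exact (hw0 _).le
        · exact le_refl 0
      · show (∑ j : Fin N, wn j) = 1
        rw [hwn]
        rw [fin_pad_sum hcard (fun i => w (eqv i))]
        rw [Equiv.sum_comp eqv w]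
        exact hw1
      · intro j _
        simp only [hzn]
        split
        · exact hzs ⟨_, rfl⟩
        · exact hne.some_mem
      · show (∑ j : Fin N, wn j • zn j) = x
        have hptw : ∀ j : Fin N, wn j • zn j
            = if h : (j : ℕ) < m then w (eqv ⟨j, h⟩) • z (eqv ⟨j, h⟩) else 0 := by
          intro j
          by_cases h : (j : ℕ) < m
          · simp only [hwn, hzn, dif_pos h]
          · simp only [hwn, hzn, dif_neg h, zero_smul]
        rw [Finset.sum_congr rfl fun j _ => hptw j,
          fin_pad_sum hcard (fun i => w (eqv i) • z (eqv i)),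
          Equiv.sum_comp eqv (fun i => w i • z i)]
        exact hsum
    · rintro x ⟨⟨wv, zv⟩, ⟨⟨hw0, hw1⟩, hz⟩, rfl⟩
      have : f (wv, zv) = Finset.univ.centerMass wv zv := by
        rw [Finset.centerMass_eq_of_sum_1 _ _ hw1]
      rw [this]
      exact Finset.centerMass_mem_convexHull _ (fun i _ => hw0 i) (by rw [hw1]; norm_num)
        (fun i _ => hz i (Set.mem_univ i))
  rw [himg]
  exact hK.image hfc

variable [Nonempty Ω]

/-- The uniform belief. -/
def unifBelief : Belief Ω :=
  ⟨fun _ => (Fintype.card Ω : ℝ)⁻¹,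
   fun _ => by positivity,
   by
     rw [Finset.sum_const, Finset.card_univ, nsmul_eq_mul]
     have : (Fintype.card Ω : ℝ) ≠ 0 := by
       exact_mod_cast Fintype.card_ne_zero
     field_simp⟩

instance : Nonempty (Belief Ω) := ⟨unifBelief⟩

lemma isCompact_beliefSet :
    IsCompact {x : Ω → ℝ | (∀ ω, 0 ≤ x ω) ∧ ∑ ω, x ω = 1} := by
  have h1 : IsClosed {x : Ω → ℝ | ∀ ω, 0 ≤ x ω} := by
    have he : {x : Ω → ℝ | ∀ ω, 0 ≤ x ω} = ⋂ ω, {x : Ω → ℝ | 0 ≤ x ω} := by ext x; simp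
    rw [he]
    exact isClosed_iInter fun ω => isClosed_le continuous_const (continuous_apply ω)
  have h2 : IsClosed {x : Ω → ℝ | ∑ ω, x ω = 1} :=
    isClosed_eq (continuous_finset_sum _ fun ω _ => continuous_apply ω) continuous_const
  have hclosed : IsClosed {x : Ω → ℝ | (∀ ω, 0 ≤ x ω) ∧ ∑ ω, x ω = 1} := by
    rw [Set.setOf_and]; exact h1.inter h2
  refine IsCompact.of_isClosed_subset (isCompact_Icc (a := (0 : Ω → ℝ)) (b := 1)) hclosed ?_
  rintro x ⟨hx0, hx1⟩
  refine Set.mem_Icc.mpr ⟨?_, ?_⟩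
  · intro ω; exact hx0 ω
  · intro ω
    have hle : x ω ≤ ∑ ω', x ω' :=
      Finset.single_le_sum (fun ω' _ => hx0 ω') (Finset.mem_univ ω)
    rw [hx1] at hle
    exact hle

instance : CompactSpace (Belief Ω) :=
  isCompact_iff_compactSpace.mp isCompact_beliefSet

/-! ### Attainment of the concave closure -/

lemma exists_optimal (v : Belief Ω → ℝ) (husc : UpperSemicontinuous v)
    {C : ℝ} (hbd : ∀ p, |v p| ≤ C) (μ : Belief Ω) :
    ∃ e : SPExp Ω, e.sigma = μ ∧ e.expect v = concaveClosure v μ := by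
  classical
  -- the (truncated) hypograph of v, inside `Belief Ω × ℝ`
  set K0 : Set (Belief Ω × ℝ) := {a | -C ≤ a.2 ∧ a.2 ≤ v a.1} with hK0
  have hK0closed : IsClosed K0 := by
    have h1 : IsClosed {a : Belief Ω × ℝ | a.2 ≤ v a.1} := by
      rw [← isOpen_compl_iff, isOpen_iff_mem_nhds]
      rintro ⟨q, r⟩ hqr
      have hlt : v q < r := not_le.mp hqr
      set y := (v q + r) / 2 with hy
      have hq : ∀ᶠ p in 𝓝 q, v p < y := husc q y (by rw [hy]; linarith)
      have hr : ∀ᶠ s in 𝓝 r, y < s := eventually_gt_nhds (by rw [hy]; linarith)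
      rw [nhds_prod_eq]
      refine Filter.mem_of_superset (Filter.prod_mem_prod hq hr) ?_
      rintro ⟨p, s⟩ ⟨hp, hs⟩
      simp only [Set.mem_compl_iff, Set.mem_setOf_eq, not_le]
      exact lt_trans hp hs
    have h2 : IsClosed {a : Belief Ω × ℝ | -C ≤ a.2} :=
      isClosed_le continuous_const continuous_snd
    rw [hK0, Set.setOf_and]
    exact h2.inter h1
  have hK0cpt : IsCompact K0 := by
    refine IsCompact.of_isClosed_subset (isCompact_univ.prod (isCompact_Icc (a := -C) (b := C)))
      hK0closed ?_
    rintro ⟨q, r⟩ ⟨h1, h2⟩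
    exact ⟨Set.mem_univ q, h1, le_trans h2 ((abs_le.mp (hbd q)).2)⟩
  set Hc : Set ((Ω → ℝ) × ℝ) := (fun a : Belief Ω × ℝ => (a.1.val, a.2)) '' K0 with hHc
  have hHccpt : IsCompact Hc :=
    hK0cpt.image ((continuous_subtype_val.comp continuous_fst).prodMk continuous_snd)
  have hHcne : (μ.val, v μ) ∈ Hc := ⟨(μ, v μ), ⟨(abs_le.mp (hbd μ)).1, le_refl _⟩, rfl⟩
  have hKc : IsCompact (convexHull ℝ Hc) := my_isCompact_convexHull hHccpt ⟨_, hHcne⟩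
  set S' : Set ℝ := {r | (μ.val, r) ∈ convexHull ℝ Hc} with hS'
  have hS'closed : IsClosed S' :=
    hKc.isClosed.preimage (Continuous.prodMk continuous_const continuous_id)
  have hS'ne : S'.Nonempty := ⟨v μ, subset_convexHull ℝ _ hHcne⟩
  have hS'bdd : BddAbove S' := by
    refine ⟨C, fun r hr => ?_⟩
    have hsub : convexHull ℝ Hc ⊆ {a : (Ω → ℝ) × ℝ | a.2 ≤ C} := by
      apply convexHull_min
      · rintro a ⟨⟨q, s⟩, ⟨h1, h2⟩, rfl⟩
        exact le_trans h2 ((abs_le.mp (hbd q)).2)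
      · rintro a ha b hb sa sb hsa hsb hsab
        have : (sa • a + sb • b).2 = sa * a.2 + sb * b.2 := rfl
        simp only [Set.mem_setOf_eq] at ha hb ⊢
        rw [this]
        have hC : sa * C + sb * C = C := by rw [← add_mul, hsab, one_mul]
        nlinarith [mul_le_mul_of_nonneg_left ha hsa, mul_le_mul_of_nonneg_left hb hsb]
    exact hsub hr
  set rstar := sSup S' with hrstar
  have hrmem : rstar ∈ S' := hS'closed.csSup_mem hS'ne hS'bdd
  -- every achievable value lies in S'
  have hsub : vSet v μ ⊆ S' := by
    rintro x ⟨e, hσ, rfl⟩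
    have hmem : (μ.val, e.expect v) = e.w.support.centerMass e.w
        (fun q : Belief Ω => (q.val, v q)) := by
      rw [Finset.centerMass_eq_of_sum_1 _ _ e.sum_one]
      refine Prod.ext ?_ ?_
      · rw [Prod.fst_sum]
        funext ω
        rw [Finset.sum_apply]
        have : ∀ q ∈ e.w.support, (e.w q • ((q : Belief Ω).val, v q)).1 ω
            = e.w q * q.val ω := fun q _ => rfl
        rw [Finset.sum_congr rfl this]
        have := mySigma_val e ω
        rw [← this, hσ]
      · rw [Prod.snd_sum]
        exact (Finset.sum_congr rfl fun q _ => rfl)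
    show (μ.val, e.expect v) ∈ convexHull ℝ Hc
    rw [hmem]
    refine Finset.centerMass_mem_convexHull _ (fun q _ => e.nonneg q)
      (by rw [e.sum_one]; norm_num) fun q hq => ?_
    exact ⟨(q, v q), ⟨(abs_le.mp (hbd q)).1, le_refl _⟩, rfl⟩
  have hccle : concaveClosure v μ ≤ rstar :=
    csSup_le_csSup hS'bdd (vSet_nonempty v μ) hsub
  -- decompose rstar as a convex combination and build an optimal experiment
  have hdec := hrmem
  rw [hS', Set.mem_setOf_eq, _root_.convexHull_eq] at hdec
  obtain ⟨ι, tt, w, z, hw0, hw1, hz, hcm⟩ := hdec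
  have hchoice : ∀ i : ι, ∃ qr : Belief Ω × ℝ,
      i ∈ tt → (qr.2 ≤ v qr.1 ∧ (qr.1.val, qr.2) = z i) := by
    intro i
    by_cases hi : i ∈ tt
    · obtain ⟨⟨q, r⟩, ⟨_, h2⟩, h3⟩ := hz i hi
      exact ⟨(q, r), fun _ => ⟨h2, h3⟩⟩
    · exact ⟨(μ, v μ), fun h => absurd h hi⟩
  choose qr hqr using hchoice
  set Q : ι → Belief Ω := fun i => (qr i).1 with hQ
  set R : ι → ℝ := fun i => (qr i).2 with hR
  obtain ⟨e, he⟩ := exists_mkExp tt w Q hw0 hw1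
  rw [Finset.centerMass_eq_of_sum_1 _ _ hw1] at hcm
  have hcm' : (∑ i ∈ tt, w i • ((Q i).val, R i)) = (μ.val, rstar) := by
    rw [← hcm]
    exact Finset.sum_congr rfl fun i hi => by rw [(hqr i hi).2]
  have hfst : ∀ ω, (∑ i ∈ tt, w i * (Q i).val ω) = μ.val ω := by
    intro ω
    have h5 := congrArg Prod.fst hcm'
    rw [Prod.fst_sum] at h5
    have h6 : ∀ i ∈ tt, (w i • ((Q i).val, R i)).1 = w i • (Q i).val := fun i _ => rfl
    rw [Finset.sum_congr rfl h6] at h5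
    calc (∑ i ∈ tt, w i * (Q i).val ω) = (∑ i ∈ tt, w i • (Q i).val) ω := by
          rw [Finset.sum_apply]; rfl
      _ = μ.val ω := by rw [h5]
  have hsnd : (∑ i ∈ tt, w i * R i) = rstar := by
    have h5 := congrArg Prod.snd hcm'
    rw [Prod.snd_sum] at h5
    exact h5
  have hσ : e.sigma = μ := by
    apply Subtype.ext; funext ω
    rw [mySigma_val_expect, he (fun p => p.val ω), hfst ω]
  have hmemv : e.expect v ∈ vSet v μ := ⟨e, hσ, rfl⟩
  have hge : rstar ≤ e.expect v := by
    rw [← hsnd, he v]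
    exact Finset.sum_le_sum fun i hi =>
      mul_le_mul_of_nonneg_left (hqr i hi).1 (hw0 i hi)
  exact ⟨e, hσ, le_antisymm (le_csSup (vSet_bddAbove v hbd μ) hmemv) (le_trans hccle hge)⟩

/-! ### The supporting hyperplane on the face of `μ` -/

/-- The linear space of directions within the face of `μ`. -/
def Esub (μ : Belief Ω) : Submodule ℝ (Ω → ℝ) where
  carrier := {x | (∑ ω, x ω) = 0 ∧ ∀ ω, μ.val ω = 0 → x ω = 0}
  add_mem' := by
    rintro a b ⟨ha1, ha2⟩ ⟨hb1, hb2⟩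
    constructor
    · have : ∑ ω, (a + b) ω = (∑ ω, a ω) + ∑ ω, b ω := by
        simp [Finset.sum_add_distrib]
      rw [this, ha1, hb1, add_zero]
    · intro ω h
      show a ω + b ω = 0
      rw [ha2 ω h, hb2 ω h, add_zero]
  zero_mem' := ⟨by simp, fun _ _ => rfl⟩
  smul_mem' := by
    rintro c a ⟨ha1, ha2⟩
    constructor
    · have : ∑ ω, (c • a) ω = c * ∑ ω, a ω := by
        simp [Finset.mul_sum]
      rw [this, ha1, mul_zero]
    · intro ω h
      show c * a ω = 0
      rw [ha2 ω h, mul_zero]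

/-- Projection-like map sending a belief `q` to a direction in the face of `μ`;
for `q` in the face of `μ` it is `q - μ`. -/
def toE (μ q : Belief Ω) : ↥(Esub μ) := by
  refine ⟨fun ω => if μ.val ω = 0 then 0 else
    q.val ω - μ.val ω + (1 - ∑ ω', if μ.val ω' = 0 then 0 else q.val ω') * μ.val ω, ?_, ?_⟩
  · set A := ∑ ω', if μ.val ω' = 0 then (0 : ℝ) else q.val ω' with hA
    have hx : ∀ ω, (if μ.val ω = 0 then (0:ℝ) else
        q.val ω - μ.val ω + (1 - A) * μ.val ω)
        = (if μ.val ω = 0 then (0:ℝ) else q.val ω) - μ.val ω + (1 - A) * μ.val ω := by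
      intro ω
      by_cases h : μ.val ω = 0
      · rw [if_pos h, if_pos h, h]; ring
      · rw [if_neg h, if_neg h]
    rw [Finset.sum_congr rfl fun ω _ => hx ω]
    rw [Finset.sum_add_distrib, Finset.sum_sub_distrib, ← Finset.mul_sum, μ.2.2, ← hA]
    ring
  · intro ω h
    exact if_pos h

lemma toE_face {μ q : Belief Ω} (hq : q ∈ faceSet μ) : (toE μ q).val = q.val - μ.val := by
  have hA : (∑ ω', if μ.val ω' = 0 then (0:ℝ) else q.val ω') = 1 := by
    have : ∀ ω' ∈ Finset.univ, (if μ.val ω' = 0 then (0:ℝ) else q.val ω') = q.val ω' := by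
      intro ω' _
      by_cases h : μ.val ω' = 0
      · rw [if_pos h, hq ω' h]
      · rw [if_neg h]
    rw [Finset.sum_congr rfl this, q.2.2]
  funext ω
  show (if μ.val ω = 0 then (0:ℝ) else
    q.val ω - μ.val ω + (1 - ∑ ω', if μ.val ω' = 0 then 0 else q.val ω') * μ.val ω)
    = q.val ω - μ.val ω
  rw [hA]
  by_cases h : μ.val ω = 0
  · rw [if_pos h, h, hq ω h]; ring
  · rw [if_neg h]; ring

lemma toE_self (μ : Belief Ω) : toE μ μ = 0 := by
  apply Subtype.ext
  rw [toE_face (face_self μ)]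
  simp

lemma sum_toE {μ : Belief Ω} (e : SPExp Ω) (hτ : ∀ p ∈ e.w.support, p ∈ faceSet μ)
    (hσ : e.sigma ∈ faceSet μ) :
    (∑ p ∈ e.w.support, e.w p • toE μ p) = toE μ e.sigma := by
  apply Subtype.ext
  rw [toE_face hσ]
  have hcoe : ((∑ p ∈ e.w.support, e.w p • toE μ p : ↥(Esub μ)) : Ω → ℝ)
      = ∑ p ∈ e.w.support, e.w p • ((toE μ p : Ω → ℝ)) := by
    rw [AddSubmonoidClass.coe_finset_sum]
    exact Finset.sum_congr rfl fun p _ => rfl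
  rw [hcoe]
  funext ω
  rw [Finset.sum_apply]
  have h1 : ∀ p ∈ e.w.support, (e.w p • ((toE μ p : Ω → ℝ))) ω
      = e.w p * (p.val ω - μ.val ω) := by
    intro p hp
    rw [toE_face (hτ p hp)]
    rfl
  rw [Finset.sum_congr rfl h1]
  have h2 : ∑ p ∈ e.w.support, e.w p * (p.val ω - μ.val ω)
      = (∑ p ∈ e.w.support, e.w p * p.val ω) - (∑ p ∈ e.w.support, e.w p) * μ.val ω := by
    rw [Finset.sum_mul, ← Finset.sum_sub_distrib]
    exact Finset.sum_congr rfl fun p _ => by ring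
  rw [h2, e.sum_one, ← mySigma_val e ω, one_mul]
  rfl

lemma expect_affine {μ : Belief Ω} (e : SPExp Ω) (hτ : ∀ p ∈ e.w.support, p ∈ faceSet μ)
    (hσ : e.sigma ∈ faceSet μ) (ψ : ↥(Esub μ) →L[ℝ] ℝ) (c : ℝ) :
    e.expect (fun q => c + ψ (toE μ q)) = c + ψ (toE μ e.sigma) := by
  rw [myExpect_eq]
  have h1 : ∀ p ∈ e.w.support, e.w p * (c + ψ (toE μ p))
      = e.w p * c + ψ (e.w p • toE μ p) := by
    intro p _
    rw [map_smul]
    simp only [smul_eq_mul]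
    ring
  rw [Finset.sum_congr rfl h1, Finset.sum_add_distrib, ← Finset.sum_mul, e.sum_one, one_mul,
    ← map_sum, sum_toE e hτ hσ]

/-- The concave closure as a function of raw vectors. -/
def ccv (v : Belief Ω → ℝ) (y : Ω → ℝ) : ℝ :=
  sSup {x | ∃ e : SPExp Ω, (e.sigma).val = y ∧ x = e.expect v}

lemma ccv_eq (v : Belief Ω → ℝ) (p : Belief Ω) : ccv v p.val = concaveClosure v p := by
  unfold ccv concaveClosure
  congr 1
  ext x
  constructor
  · rintro ⟨e, h1, h2⟩
    exact ⟨e, Subtype.ext h1, h2⟩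
  · rintro ⟨e, h1, h2⟩
    exact ⟨e, by rw [h1], h2⟩

lemma exists_support_functional (v : Belief Ω → ℝ) {C : ℝ} (hbd : ∀ p, |v p| ≤ C)
    (μ : Belief Ω) :
    ∃ ψ : ↥(Esub μ) →L[ℝ] ℝ, ∀ q ∈ faceSet μ,
      concaveClosure v q ≤ concaveClosure v μ + ψ (toE μ q) := by
  classical
  -- beliefs from admissible directions
  have hbel : ∀ u : ↥(Esub μ), (∀ ω, 0 ≤ μ.val ω + (u : Ω → ℝ) ω) →
      ∃ p : Belief Ω, p.val = fun ω => μ.val ω + (u : Ω → ℝ) ω := by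
    intro u hu
    refine ⟨⟨fun ω => μ.val ω + (u : Ω → ℝ) ω, hu, ?_⟩, rfl⟩
    rw [Finset.sum_add_distrib, μ.2.2, u.2.1, add_zero]
  set H : Set (↥(Esub μ) × ℝ) := {a | (∀ ω, 0 ≤ μ.val ω + (a.1 : Ω → ℝ) ω) ∧
      a.2 ≤ ccv v (fun ω => μ.val ω + (a.1 : Ω → ℝ) ω)} with hH
  have hconv : Convex ℝ H := by
    rintro ⟨u₁, r₁⟩ ⟨h1a, h1b⟩ ⟨u₂, r₂⟩ ⟨h2a, h2b⟩ sa sb hsa hsb hsab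
    obtain ⟨p₁, hp₁⟩ := hbel u₁ h1a
    obtain ⟨p₂, hp₂⟩ := hbel u₂ h2a
    have hcomb : ∀ ω, 0 ≤ μ.val ω + ((sa • u₁ + sb • u₂ : ↥(Esub μ)) : Ω → ℝ) ω := by
      intro ω
      have hcoord : ((sa • u₁ + sb • u₂ : ↥(Esub μ)) : Ω → ℝ) ω
          = sa * (u₁ : Ω → ℝ) ω + sb * (u₂ : Ω → ℝ) ω := rfl
      rw [hcoord]
      have e1 := h1a ω; have e2 := h2a ω
      have hμ : μ.val ω = (sa + sb) * μ.val ω := by rw [hsab, one_mul]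
      nlinarith [mul_le_mul_of_nonneg_left e1 hsa, mul_le_mul_of_nonneg_left e2 hsb]
    obtain ⟨p₃, hp₃⟩ := hbel _ hcomb
    refine ⟨hcomb, ?_⟩
    show sa * r₁ + sb * r₂ ≤
      ccv v (fun ω => μ.val ω + ((sa • u₁ + sb • u₂ : ↥(Esub μ)) : Ω → ℝ) ω)
    have hval : ∀ ω, p₃.val ω = sa * p₁.val ω + (1 - sa) * p₂.val ω := by
      intro ω
      have hp₃' : p₃.val ω = μ.val ω + ((sa • u₁ + sb • u₂ : ↥(Esub μ)) : Ω → ℝ) ω := by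
        rw [hp₃]
      have hp₁' : p₁.val ω = μ.val ω + (u₁ : Ω → ℝ) ω := by rw [hp₁]
      have hp₂' : p₂.val ω = μ.val ω + (u₂ : Ω → ℝ) ω := by rw [hp₂]
      have hcoord : ((sa • u₁ + sb • u₂ : ↥(Esub μ)) : Ω → ℝ) ω
          = sa * (u₁ : Ω → ℝ) ω + sb * (u₂ : Ω → ℝ) ω := rfl
      have hb' : sb = 1 - sa := by linarith
      rw [hp₃', hp₁', hp₂', hcoord, hb']; ring
    have hcc := cc_concave v hbd hsa (by linarith) hval
    have hfun : (fun ω => μ.val ω + ((sa • u₁ + sb • u₂ : ↥(Esub μ)) : Ω → ℝ) ω)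
        = p₃.val := hp₃.symm
    rw [hfun, ccv_eq]
    have hr1 : r₁ ≤ concaveClosure v p₁ := by
      have : (fun ω => μ.val ω + (u₁ : Ω → ℝ) ω) = p₁.val := hp₁.symm
      rw [this, ccv_eq] at h1b; exact h1b
    have hr2 : r₂ ≤ concaveClosure v p₂ := by
      have : (fun ω => μ.val ω + (u₂ : Ω → ℝ) ω) = p₂.val := hp₂.symm
      rw [this, ccv_eq] at h2b; exact h2b
    have hb' : sb = 1 - sa := by linarith
    have m1 := mul_le_mul_of_nonneg_left hr1 hsa
    have m2 := mul_le_mul_of_nonneg_left hr2 hsb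
    rw [hb'] at m2 ⊢
    linarith
  -- a positive margin around `μ` inside the face
  set ρ : ℝ := Finset.univ.inf' Finset.univ_nonempty
    (fun ω => if μ.val ω = 0 then 1 else μ.val ω) with hρ
  have hρpos : 0 < ρ := by
    rw [hρ, Finset.lt_inf'_iff]
    intro ω _
    by_cases h : μ.val ω = 0
    · rw [if_pos h]; norm_num
    · rw [if_neg h]
      exact lt_of_le_of_ne (μ.2.1 ω) (Ne.symm h)
  have hball : ∀ u : ↥(Esub μ), ‖u‖ < ρ → ∀ ω, 0 ≤ μ.val ω + (u : Ω → ℝ) ω := by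
    intro u hu ω
    by_cases h : μ.val ω = 0
    · rw [h, u.2.2 ω h, add_zero]
    · have h1 : |(u : Ω → ℝ) ω| ≤ ‖(u : Ω → ℝ)‖ := by
        have := norm_le_pi_norm (u : Ω → ℝ) ω
        simpa [Real.norm_eq_abs] using this
      have h2 : ‖(u : Ω → ℝ)‖ = ‖u‖ := rfl
      have h3 : ρ ≤ μ.val ω := by
        have := Finset.inf'_le (f := fun ω => if μ.val ω = 0 then (1:ℝ) else μ.val ω)
          (Finset.mem_univ ω)
        rw [if_neg h] at this
        rw [hρ]; exact this
      have h4 : -((u : Ω → ℝ) ω) ≤ |(u : Ω → ℝ) ω| := neg_le_abs _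
      rw [h2] at h1
      linarith
  have hCbel : ∀ (u : ↥(Esub μ)) (hu : ∀ ω, 0 ≤ μ.val ω + (u : Ω → ℝ) ω),
      -C ≤ ccv v (fun ω => μ.val ω + (u : Ω → ℝ) ω) := by
    intro u hu
    obtain ⟨p, hp⟩ := hbel u hu
    rw [← hp, ccv_eq]
    have := le_cc v hbd p
    have h2 := (abs_le.mp (hbd p)).1
    linarith
  -- interior point and excluded boundary point
  set z₀ : ↥(Esub μ) × ℝ := (0, -C - 1) with hz₀
  have hzint : z₀ ∈ interior H := by
    rw [mem_interior]
    refine ⟨(Metric.ball (0 : ↥(Esub μ)) ρ) ×ˢ (Set.Iio (-C)), ?_, ?_, ?_⟩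
    · rintro ⟨u, r⟩ ⟨hu, hr⟩
      have hu' : ‖u‖ < ρ := by simpa [Metric.mem_ball, dist_zero_right] using hu
      have hnn := hball u hu'
      exact ⟨hnn, le_trans (le_of_lt hr) (hCbel u hnn)⟩
    · exact Metric.isOpen_ball.prod isOpen_Iio
    · constructor
      · simpa [hz₀, Metric.mem_ball, dist_zero_right] using hρpos
      · show -C - 1 < -C
        linarith
  set ccμ : ℝ := concaveClosure v μ with hccμ
  set p₀ : ↥(Esub μ) × ℝ := (0, ccμ) with hp₀
  have hccv0 : ∀ r : ℝ, r ≤ ccv v (fun ω => μ.val ω + ((0 : ↥(Esub μ)) : Ω → ℝ) ω) → r ≤ ccμ := by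
    intro r hr
    have : (fun ω => μ.val ω + ((0 : ↥(Esub μ)) : Ω → ℝ) ω) = μ.val := by
      funext ω; show μ.val ω + 0 = μ.val ω; ring
    rw [this, ccv_eq] at hr
    exact hr
  have hpne : p₀ ∉ interior H := by
    intro hmem
    rw [mem_interior_iff_mem_nhds] at hmem
    obtain ⟨ε, hε, hb2⟩ := Metric.mem_nhds_iff.mp hmem
    have hmem2 : ((0 : ↥(Esub μ)), ccμ + ε / 2) ∈ H := by
      apply hb2
      rw [Metric.mem_ball, hp₀]
      have hd : dist (((0 : ↥(Esub μ)), ccμ + ε / 2)) ((0 : ↥(Esub μ)), ccμ)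
          = max (dist (0 : ↥(Esub μ)) 0) (dist (ccμ + ε / 2) ccμ) := Prod.dist_eq
      have hd2 : dist (ccμ + ε / 2) ccμ = ε / 2 := by
        rw [Real.dist_eq]
        have he : ccμ + ε / 2 - ccμ = ε / 2 := by ring
        rw [he, abs_of_pos (by linarith)]
      rw [hd, hd2, dist_self, max_eq_right (by linarith)]
      linarith
    have := hccv0 _ hmem2.2
    linarith
  obtain ⟨f, hf⟩ := geometric_hahn_banach_open_point (hconv.interior) isOpen_interior hpne
  -- extend the strict separation to all of H
  have hfH : ∀ a ∈ H, f a ≤ f p₀ := by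
    intro a ha
    have hseg : ∀ t : ℝ, 0 < t → t ≤ 1 → f (t • z₀ + (1 - t) • a) < f p₀ := by
      intro t ht0 ht1
      refine hf _ (hconv.combo_interior_closure_mem_interior hzint (subset_closure ha) ht0
        (by linarith) (by ring))
    have hcont : Continuous fun t : ℝ => f (t • z₀ + (1 - t) • a) := by
      apply f.continuous.comp
      exact (continuous_id.smul continuous_const).add
        ((continuous_const.sub continuous_id).smul continuous_const)
    have htend : Filter.Tendsto (fun n : ℕ => f ((1 / (n + 1) : ℝ) • z₀
        + (1 - 1 / (n + 1) : ℝ) • a)) Filter.atTop (nhds (f a)) := by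
      have h0 : Filter.Tendsto (fun n : ℕ => (1 / (n + 1) : ℝ)) Filter.atTop (nhds 0) :=
        tendsto_one_div_add_atTop_nhds_zero_nat
      have := (hcont.tendsto 0).comp h0
      simpa [Function.comp_def] using this
    refine le_of_tendsto htend ?_
    refine Filter.Eventually.of_forall fun n => ?_
    have hpos : 0 < (1 / (n + 1) : ℝ) := by positivity
    have hle1 : (1 / (n + 1) : ℝ) ≤ 1 := by
      rw [div_le_one (by positivity)]
      have : (0:ℝ) ≤ n := Nat.cast_nonneg n
      linarith
    exact (hseg _ hpos hle1).le
  set β : ℝ := f (0, 1) with hβ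
  have hsplit : ∀ (u : ↥(Esub μ)) (r : ℝ), f (u, r) = f (u, 0) + r * β := by
    intro u r
    have : ((u, r) : ↥(Esub μ) × ℝ) = (u, 0) + r • ((0 : ↥(Esub μ)), (1:ℝ)) := by
      rw [Prod.ext_iff]
      constructor
      · show u = u + r • 0
        rw [smul_zero, add_zero]
      · show r = 0 + r * 1
        ring
    rw [this, map_add, map_smul, smul_eq_mul, hβ]
  have hf00 : f (0, 0) = 0 := by
    have : ((0, 0) : ↥(Esub μ) × ℝ) = 0 := rfl
    rw [this, map_zero]
  have hfp₀ : f p₀ = ccμ * β := by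
    rw [hp₀, hsplit 0 ccμ, hf00, zero_add]
  have hβ0 : 0 ≤ β := by
    by_contra hneg
    push_neg at hneg
    obtain ⟨n, hn⟩ := exists_nat_gt (-C - 1 - ccμ)
    have hmem : ((0 : ↥(Esub μ)), -C - 1 - n) ∈ H := by
      constructor
      · intro ω
        show 0 ≤ μ.val ω + ((0 : ↥(Esub μ)) : Ω → ℝ) ω
        show 0 ≤ μ.val ω + 0
        rw [add_zero]; exact μ.2.1 ω
      · show -C - 1 - (n:ℝ) ≤ ccv v fun ω => μ.val ω + ((0 : ↥(Esub μ)) : Ω → ℝ) ω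
        refine le_trans ?_ (hCbel 0 fun ω => by
          show 0 ≤ μ.val ω + 0
          rw [add_zero]; exact μ.2.1 ω)
        have : (0:ℝ) ≤ n := Nat.cast_nonneg n
        linarith
    have hle := hfH _ hmem
    rw [hsplit, hf00, zero_add, hfp₀] at hle
    have hlt : ccμ < -C - 1 - n := by nlinarith
    linarith
  have hβne : β ≠ 0 := by
    intro h0
    have h1 := hf z₀ hzint
    rw [hz₀, hsplit, hf00, zero_add, hfp₀, h0, mul_zero, mul_zero] at h1
    exact lt_irrefl 0 h1
  have hβpos : 0 < β := lt_of_le_of_ne hβ0 (Ne.symm hβne)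
  -- the subgradient functional
  set φ : ↥(Esub μ) →L[ℝ] ℝ := f.comp (ContinuousLinearMap.inl ℝ (↥(Esub μ)) ℝ) with hφ
  refine ⟨(-β⁻¹) • φ, ?_⟩
  intro q hq
  set u : ↥(Esub μ) := toE μ q with hu
  have huval : (u : Ω → ℝ) = q.val - μ.val := toE_face hq
  have hnn : ∀ ω, 0 ≤ μ.val ω + (u : Ω → ℝ) ω := by
    intro ω
    rw [huval]
    show 0 ≤ μ.val ω + (q.val ω - μ.val ω)
    have := q.2.1 ω
    linarith
  have hfun2 : (fun ω => μ.val ω + (u : Ω → ℝ) ω) = q.val := by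
    funext ω
    rw [huval]
    show μ.val ω + (q.val ω - μ.val ω) = q.val ω
    ring
  have hmem : (u, concaveClosure v q) ∈ H := by
    refine ⟨hnn, ?_⟩
    rw [hfun2, ccv_eq]
  have hle := hfH _ hmem
  rw [hsplit, hfp₀] at hle
  have hφu : φ u = f (u, 0) := by
    rw [hφ]
    rfl
  have hgoal : ((-β⁻¹) • φ) u = -β⁻¹ * f (u, 0) := by
    rw [ContinuousLinearMap.smul_apply, hφu, smul_eq_mul]
  rw [hgoal]
  have hβinv : 0 < β⁻¹ := inv_pos.mpr hβpos
  -- from f(u,0) + ccq * β ≤ ccμ * β deduce ccq ≤ ccμ - β⁻¹ f(u,0)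
  have h9 : concaveClosure v q * β ≤ ccμ * β - f (u, 0) := by linarith
  have h10 : concaveClosure v q ≤ ccμ - β⁻¹ * f (u, 0) := by
    have h11 := mul_le_mul_of_nonneg_right h9 (le_of_lt hβinv)
    have h12 : concaveClosure v q * β * β⁻¹ = concaveClosure v q := by
      rw [mul_assoc, mul_inv_cancel₀ hβne, mul_one]
    have h13 : (ccμ * β - f (u, 0)) * β⁻¹ = ccμ - β⁻¹ * f (u, 0) := by
      rw [sub_mul, mul_assoc, mul_inv_cancel₀ hβne, mul_one, mul_comm (f (u, 0)) β⁻¹]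
    rw [h12, h13] at h11
    exact h11
  linarith

end AuxSupportIdentify

/-- Lemma 4 (lem-support-indentify): the optimal supports of Bayesian persuasion are
identified by a set O with μ ∈ conv(O). -/
theorem lem_support_identify {Ω : Type*} [Fintype Ω] [Nonempty Ω]
    (v : Belief Ω → ℝ) (husc : UpperSemicontinuous v)
    (C : ℝ) (hbd : ∀ p, |v p| ≤ C) (μ : Belief Ω) :
    ∃ O : Set (Belief Ω),
      μ.val ∈ convexHull ℝ (Subtype.val '' O) ∧
      ∀ p : Belief Ω, p.val ∈ convexHull ℝ (Subtype.val '' O) →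
        ∀ e : SPExp Ω, SPExp.sigma e = p →
          (SPExp.expect e v = concaveClosure v p ↔ ↑(SPExp.tau e) ⊆ O) := by
  classical
  obtain ⟨ψ, hψ⟩ := exists_support_functional v hbd μ
  obtain ⟨estar, hσstar, hvstar⟩ := exists_optimal v husc hbd μ
  set L : Belief Ω → ℝ := fun q => concaveClosure v μ + ψ (toE μ q) with hL
  set O : Set (Belief Ω) := {q | q ∈ faceSet μ ∧ v q = L q} with hO
  have hLμ : L μ = concaveClosure v μ := by
    rw [hL]
    simp only [toE_self, map_zero, add_zero]
  have hvL : ∀ q ∈ faceSet μ, v q ≤ L q := fun q hq =>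
    le_trans (le_cc v hbd q) (hψ q hq)
  -- experiments with barycenter in the face and optimal value have support in O
  have hsupO : ∀ e : SPExp Ω, e.sigma ∈ faceSet μ → e.expect v = L e.sigma →
      ∀ p ∈ e.w.support, p ∈ O := by
    intro e hσf heq p hp
    have hτ := tau_subset_face e hσf
    have hswap : e.expect L = L e.sigma := expect_affine e hτ hσf ψ (concaveClosure v μ)
    have hzero : ∑ q ∈ e.w.support, e.w q * (L q - v q) = 0 := by
      have hd : ∑ q ∈ e.w.support, e.w q * (L q - v q)
          = e.expect L - e.expect v := by
        rw [myExpect_eq, myExpect_eq, ← Finset.sum_sub_distrib]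
        exact Finset.sum_congr rfl fun q _ => by ring
      rw [hd, hswap, heq, sub_self]
    have hterm := (Finset.sum_eq_zero_iff_of_nonneg fun q hq =>
      mul_nonneg (e.nonneg q) (by linarith [hvL q (hτ q hq)])).mp hzero p hp
    rcases mul_eq_zero.mp hterm with h1 | h1
    · exact absurd h1 (Finsupp.mem_support_iff.mp hp)
    · exact ⟨hτ p hp, by linarith⟩
  -- experiments with support in O have barycenter in the convex hull of O
  have hconvO : ∀ e : SPExp Ω, (∀ p ∈ e.w.support, p ∈ O) →
      (e.sigma).val ∈ convexHull ℝ (Subtype.val '' O) := by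
    intro e hsup
    have hcm : (e.sigma).val = e.w.support.centerMass e.w (fun q : Belief Ω => q.val) := by
      rw [Finset.centerMass_eq_of_sum_1 _ _ e.sum_one]
      funext ω
      rw [mySigma_val e ω, Finset.sum_apply]
      rfl
    rw [hcm]
    exact Finset.centerMass_mem_convexHull _ (fun q _ => e.nonneg q)
      (by rw [e.sum_one]; norm_num) fun q hq => ⟨q, hsup q hq, rfl⟩
  refine ⟨O, ?_, ?_⟩
  · have hstar : ∀ p ∈ estar.w.support, p ∈ O := by
      apply hsupO
      · rw [hσstar]; exact face_self μ
      · rw [hσstar, hLμ, ← hvstar]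
    have := hconvO estar hstar
    rw [hσstar] at this
    exact this
  · intro p hp e hσ
    -- p lies in the face of μ
    have hpface : p ∈ faceSet μ := by
      intro ω hω
      have hsub : convexHull ℝ (Subtype.val '' O) ⊆ {x : Ω → ℝ | μ.val ω = 0 → x ω = 0} := by
        apply convexHull_min
        · rintro x ⟨q, hqO, rfl⟩
          exact fun h => hqO.1 ω h
        · rintro x hx y hy sa sb hsa hsb hsab h
          show sa * x ω + sb * y ω = 0
          rw [hx h, hy h, mul_zero, mul_zero, add_zero]
      exact hsub hp hω
    -- the concave closure agrees with L on the hull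
    have hccp : concaveClosure v p = L p := by
      apply le_antisymm
      · refine csSup_le (vSet_nonempty v p) ?_
        rintro x ⟨e', hσ', rfl⟩
        have hσ'f : e'.sigma ∈ faceSet μ := by rw [hσ']; exact hpface
        have hτ' := tau_subset_face e' hσ'f
        calc e'.expect v ≤ e'.expect L := myExpect_mono e' fun q hq => hvL q (hτ' q hq)
          _ = L e'.sigma := expect_affine e' hτ' hσ'f ψ (concaveClosure v μ)
          _ = L p := by rw [hσ']
      · rw [_root_.convexHull_eq] at hp
        obtain ⟨ι, tt, w, z, hw0, hw1, hz, hcm⟩ := hp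
        have hchoice : ∀ i : ι, ∃ q : Belief Ω, i ∈ tt → (q ∈ O ∧ q.val = z i) := by
          intro i
          by_cases hi : i ∈ tt
          · obtain ⟨q, hq1, hq2⟩ := hz i hi
            exact ⟨q, fun _ => ⟨hq1, hq2⟩⟩
          · exact ⟨μ, fun h => absurd h hi⟩
        choose Q hQ using hchoice
        obtain ⟨e', he'⟩ := exists_mkExp tt w Q hw0 hw1
        rw [Finset.centerMass_eq_of_sum_1 _ _ hw1] at hcm
        have hσ' : e'.sigma = p := by
          apply Subtype.ext; funext ω
          rw [mySigma_val_expect, he' (fun q => q.val ω)]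
          have h5 : ∀ i ∈ tt, w i * (Q i).val ω = (w i • z i) ω := by
            intro i hi
            rw [← (hQ i hi).2]
            rfl
          rw [Finset.sum_congr rfl h5, ← Finset.sum_apply, hcm]
        have hexp : e'.expect v = L p := by
          rw [he' v]
          have h6 : ∀ i ∈ tt, w i * v (Q i) = w i * L (Q i) := fun i hi => by
            rw [(hQ i hi).1.2]
          rw [Finset.sum_congr rfl h6, ← he' L]
          have hτ' : ∀ q ∈ e'.w.support, q ∈ faceSet μ := by
            apply tau_subset_face
            rw [hσ']; exact hpface
          have := expect_affine e' hτ' (by rw [hσ']; exact hpface) ψ (concaveClosure v μ)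
          rw [this, hσ']
        rw [← hexp]
        exact le_csSup (vSet_bddAbove v hbd p) ⟨e', hσ', rfl⟩
    constructor
    · intro heq
      intro q hq
      have hq' : q ∈ e.w.support := hq
      exact hsupO e (by rw [hσ]; exact hpface) (by rw [hσ, ← hccp]; exact heq) q hq'
    · intro hsub
      have hO' : ∀ q ∈ e.w.support, q ∈ O := fun q hq => hsub hq
      have hτ : ∀ q ∈ e.w.support, q ∈ faceSet μ := fun q hq => (hO' q hq).1
      calc e.expect v = e.expect L := myExpect_congr e fun q hq => (hO' q hq).2
        _ = L e.sigma := expect_affine e hτ (by rw [hσ]; exact hpface) ψ (concaveClosure v μ)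
        _ = L p := by rw [hσ]
        _ = concaveClosure v p := hccp.symm
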